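/- Let N ≥ 2 be an integer and consider the mesh of [0,1] with nodes x_0 = 0, x_j = 2^{j−N} for j = 1, …, N−1, and x_N = 1 (geometric refinement toward x = 0). For j = 1, …, N let |K_j| = x_j − x_{j−1} and d_{K_j} = sup_{x ∈ [x_{j−1}, x_j]} min(x, 1−x). Then Σ_{j=1}^N d_{K_j} / |K_j| = 2N − 2. -/

import Mathlib

lemma sSup_min_left {a b : ℝ} (hab : a ≤ b) (hb : b ≤ 1/2) :
    sSup ((fun t => min t (1 - t)) '' Set.Icc a b) = b := by
  have himg : ((fun t : ℝ => min t (1 - t)) '' Set.Icc a b) = Set.Icc a b := by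
    rw [show ((fun t : ℝ => min t (1 - t)) '' Set.Icc a b) = id '' Set.Icc a b from
      Set.image_congr fun t ht => min_eq_left (by
        simp only [Set.mem_Icc] at ht; linarith [ht.2]), Set.image_id]
  rw [himg, csSup_Icc hab]

lemma sSup_min_right :
    sSup ((fun t : ℝ => min t (1 - t)) '' Set.Icc (1/2) 1) = 1/2 := by
  have himg : ((fun t : ℝ => min t (1 - t)) '' Set.Icc (1/2 : ℝ) 1) = Set.Icc 0 (1/2) := by
    have h1 : ((fun t : ℝ => min t (1 - t)) '' Set.Icc (1/2 : ℝ) 1)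
        = (fun t : ℝ => 1 - t) '' Set.Icc (1/2 : ℝ) 1 :=
      Set.image_congr fun t ht => min_eq_right (by
        simp only [Set.mem_Icc] at ht; linarith [ht.1])
    rw [h1, Set.image_const_sub_Icc]; norm_num
  rw [himg, csSup_Icc (by norm_num)]

/-- Nodes of the one-dimensional boundary-layer mesh of `[0,1]`:
`x_0 = 0`, `x_j = 2^j/2^N` for `1 ≤ j ≤ N-1`, and `x_N = 1`. -/
noncomputable def blNode (N j : ℕ) : ℝ :=
  if j = 0 then 0 else if j = N then 1 else (2 : ℝ) ^ j / 2 ^ N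

/-- For the boundary-layer mesh, the sum `Σ_j d_{K_j}/|K_j|` equals `2N - 2`,
where `|K_j| = x_j - x_{j-1}` and `d_{K_j} = sup_{x ∈ [x_{j-1},x_j]} min(x,1-x)`. -/
theorem boundary_layer_mesh_weighted_sum (N : ℕ) (hN : 2 ≤ N) :
    ∑ j ∈ Finset.Icc 1 N,
      (sSup ((fun t => min t (1 - t)) '' Set.Icc (blNode N (j - 1)) (blNode N j))) /
        (blNode N j - blNode N (j - 1)) = 2 * N - 2 := by
  have h2N : (4 : ℝ) ≤ 2 ^ N := by
    calc (4:ℝ) = 2^2 := by norm_num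
    _ ≤ 2^N := pow_le_pow_right₀ (by norm_num) hN
  have h2Npos : (0:ℝ) < 2 ^ N := by positivity
  have key : ∀ j ∈ Finset.Icc 1 N,
      (sSup ((fun t => min t (1 - t)) '' Set.Icc (blNode N (j - 1)) (blNode N j))) /
        (blNode N j - blNode N (j - 1))
      = 2 - (if j = 1 then (1:ℝ) else 0) - (if j = N then (1:ℝ) else 0) := by
    intro j hj
    simp only [Finset.mem_Icc] at hj
    obtain ⟨hj1, hjN⟩ := hj
    rcases eq_or_ne j 1 with rfl | hne1
    · -- j = 1
      have hN1 : (1:ℕ) ≠ N := by omega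
      have hx0 : blNode N 0 = 0 := by simp [blNode]
      have hx1 : blNode N 1 = 2 / 2 ^ N := by simp [blNode, hN1]
      rw [hx0, hx1, if_pos rfl, if_neg hN1]
      rw [sSup_min_left (by positivity)
        (by rw [div_le_div_iff₀ h2Npos (by norm_num)]; linarith)]
      rw [sub_zero, div_self (by positivity)]
      norm_num
    · rcases eq_or_ne j N with heq | hneN
      · -- j = N
        have hNm0 : N - 1 ≠ 0 := by omega
        have hNmN : N - 1 ≠ N := by omega
        have hxm : blNode N (N - 1) = 1/2 := by
          simp only [blNode, if_neg hNm0, if_neg hNmN]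
          have hE : N = (N - 1) + 1 := by omega
          rw [hE, pow_succ]
          have : (0:ℝ) < 2 ^ (N-1) := by positivity
          field_simp
          rw [Nat.add_sub_cancel]
        have hxN : blNode N N = 1 := by
          simp [blNode, show N ≠ 0 by omega]
        have hNne1 : N ≠ 1 := by omega
        rw [heq, hxm, hxN, sSup_min_right, if_neg hNne1, if_pos rfl]
        norm_num
      · -- 2 ≤ j ≤ N-1
        have hjm0 : j - 1 ≠ 0 := by omega
        have hjmN : j - 1 ≠ N := by omega
        have hj0 : j ≠ 0 := by omega
        have hxm : blNode N (j - 1) = (2:ℝ) ^ (j-1) / 2 ^ N := by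
          simp [blNode, hjm0, hjmN]
        have hxj : blNode N j = (2:ℝ) ^ j / 2 ^ N := by simp [blNode, hj0, hneN]
        have hpow : (2:ℝ) ^ j = 2 * 2 ^ (j - 1) := by
          rw [← pow_succ']
          congr 1
          omega
        have hle : (2:ℝ) ^ j / 2 ^ N ≤ 1/2 := by
          rw [div_le_div_iff₀ h2Npos (by norm_num)]
          have h1 : (2:ℝ)^j * 2 = 2 ^ (j+1) := by rw [pow_succ]
          rw [h1]
          have : (2:ℝ)^(j+1) ≤ 2^N := pow_le_pow_right₀ (by norm_num) (by omega)
          linarith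
        have hmono : (2:ℝ) ^ (j-1) / 2 ^ N ≤ (2:ℝ) ^ j / 2 ^ N := by
          gcongr
          · norm_num
          · omega
        rw [hxm, hxj, sSup_min_left hmono hle, if_neg hne1, if_neg hneN]
        have hsub : (2:ℝ)^j/2^N - 2^(j-1)/2^N = 2^(j-1)/2^N := by
          rw [hpow]; ring
        rw [hsub, hpow]
        have hp : (0:ℝ) < 2 ^ (j-1) := by positivity
        field_simp
        norm_num
  rw [Finset.sum_congr rfl key]
  have hN1 : (1:ℕ) ≤ N := by omega
  simp only [Finset.sum_sub_distrib, Finset.sum_const, Finset.sum_ite_eq',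
    Finset.mem_Icc, Nat.card_Icc]
  simp [hN1, hN, Nat.le_refl]
  ring
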